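/- Monotone Picard iteration: under the M-matrix condition on h, the successive iterates of the inner iteration for the implicit scheme form a monotone nondecreasing sequence; precisely, if W^k = V^{k+1} − V^k satisfies the linear system A(Σ^k)W^k = [F(q^k) − (1/2)(Σ^{k−1})²·q^k] componentwise with zero boundary values, where F(q) − (1/2)Σ(q')²·q ≥ 0 whenever Σ(q') is the maximizer for q', then W^k ≥ 0 componentwise. -/

import Mathlib

set_option maxHeartbeats 1000000 in
theorem picard_iteration_monotone
    (r Δt h Sl Sh : ℝ) (M : ℕ) (hr : 0 ≤ r) (hΔt : 0 < Δt) (hh : 0 < h)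
    (hl : 0 < Sl) (hlh : Sl ≤ Sh) (hM : 2 ≤ M)
    (hmesh : h * max (2*r - Sl^2) (Sh^2 - 2*r) ≤ 2 * Sl^2)
    (F : ℝ → ℝ) (hF : ∀ q, F q = (1/2) * max (Sl^2 * q) (Sh^2 * q))
    (Ssel : ℝ → ℝ) (hSsel : ∀ q, Ssel q = if 0 ≤ q then Sh else Sl)
    (q p : ℕ → ℝ) (W : ℕ → ℝ)
    (hsys : ∀ i, 0 < i → i < M →
      (1/Δt + r) * W i - r * (W (i+1) - W (i-1))/(2*h)
        - ((Ssel (q i))^2/2) * ((W (i+1) - 2*W i + W (i-1))/h^2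
            - (W (i+1) - W (i-1))/(2*h))
        = F (q i) - (1/2) * (Ssel (p i))^2 * q i)
    (hleft : W 0 = 0) (hright : W M = 0) :
    ∀ i ≤ M, 0 ≤ W i := by
  -- find minimizing index
  obtain ⟨m, hmmem, hmin⟩ := Finset.exists_min_image (Finset.range (M+1)) W
    ⟨0, Finset.mem_range.mpr (Nat.succ_pos M)⟩
  have hmM : m ≤ M := Nat.lt_succ_iff.mp (Finset.mem_range.mp hmmem)
  suffices h0 : 0 ≤ W m by
    intro i hi
    exact le_trans h0 (hmin i (Finset.mem_range.mpr (Nat.lt_succ_of_le hi)))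
  by_contra h0
  push_neg at h0
  have hm0 : m ≠ 0 := by rintro rfl; rw [hleft] at h0; linarith
  have hmMne : m ≠ M := by rintro rfl; rw [hright] at h0; linarith
  have hm1 : 0 < m := Nat.pos_of_ne_zero hm0
  have hm2 : m < M := lt_of_le_of_ne hmM hmMne
  have e := hsys m hm1 hm2
  set s := Ssel (q m) with hsdef
  -- s is Sl or Sh
  have hs : s = Sl ∨ s = Sh := by
    rw [hsdef, hSsel]; split_ifs <;> simp
  have hSl2 : Sl^2 ≤ s^2 := by
    rcases hs with h' | h' <;> rw [h'] <;> nlinarith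
  have hSh2 : s^2 ≤ Sh^2 := by
    rcases hs with h' | h' <;> rw [h'] <;> nlinarith
  -- coefficient sign conditions
  have hA1 : h * (s^2 - 2*r) ≤ 2 * s^2 := by
    have h1 : h * (s^2 - 2*r) ≤ h * (Sh^2 - 2*r) := by
      apply mul_le_mul_of_nonneg_left _ hh.le; linarith
    have h2 : h * (Sh^2 - 2*r) ≤ h * max (2*r - Sl^2) (Sh^2 - 2*r) := by
      apply mul_le_mul_of_nonneg_left (le_max_right _ _) hh.le
    linarith
  have hA2 : h * (2*r - s^2) ≤ 2 * s^2 := by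
    have h1 : h * (2*r - s^2) ≤ h * (2*r - Sl^2) := by
      apply mul_le_mul_of_nonneg_left _ hh.le; linarith
    have h2 : h * (2*r - Sl^2) ≤ h * max (2*r - Sl^2) (Sh^2 - 2*r) := by
      apply mul_le_mul_of_nonneg_left (le_max_left _ _) hh.le
    linarith
  have ha' : 2*r*h - 2*s^2 - s^2*h ≤ 0 := by nlinarith
  have hc' : -(2*r*h) - 2*s^2 + s^2*h ≤ 0 := by nlinarith
  -- RHS nonneg
  have hR : 0 ≤ F (q m) - (1/2) * (Ssel (p m))^2 * q m := by
    rw [hF, hSsel]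
    split_ifs with hq
    · have := le_max_right (Sl^2 * q m) (Sh^2 * q m); linarith
    · have := le_max_left (Sl^2 * q m) (Sh^2 * q m); linarith
  -- cleared-denominator polynomial identity
  have hΔ : Δt ≠ 0 := ne_of_gt hΔt
  have hhne : h ≠ 0 := ne_of_gt hh
  have e' : (4*Δt*h^2) * ((2*r*h - 2*s^2 - s^2*h) * (W (m-1) - W m))
        + (4*Δt*h^2) * ((-(2*r*h) - 2*s^2 + s^2*h) * (W (m+1) - W m))
        + (16*h^4 + 16*r*Δt*h^4) * W m
        = (16*Δt*h^4) * (F (q m) - (1/2) * (Ssel (p m))^2 * q m) := by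
    field_simp at e
    linear_combination (4*h^2) * e
  -- minimality
  have hu : 0 ≤ W (m-1) - W m := by
    have := hmin (m-1) (Finset.mem_range.mpr (by omega))
    linarith
  have hv : 0 ≤ W (m+1) - W m := by
    have := hmin (m+1) (Finset.mem_range.mpr (by omega))
    linarith
  have h1 : (2*r*h - 2*s^2 - s^2*h) * (W (m-1) - W m) ≤ 0 :=
    mul_nonpos_of_nonpos_of_nonneg ha' hu
  have h2 : (-(2*r*h) - 2*s^2 + s^2*h) * (W (m+1) - W m) ≤ 0 :=
    mul_nonpos_of_nonpos_of_nonneg hc' hv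
  have t1 : (4*Δt*h^2) * ((2*r*h - 2*s^2 - s^2*h) * (W (m-1) - W m)) ≤ 0 :=
    mul_nonpos_of_nonneg_of_nonpos (by positivity) h1
  have t2 : (4*Δt*h^2) * ((-(2*r*h) - 2*s^2 + s^2*h) * (W (m+1) - W m)) ≤ 0 :=
    mul_nonpos_of_nonneg_of_nonpos (by positivity) h2
  have t3 : 0 ≤ (16*Δt*h^4) * (F (q m) - (1/2) * (Ssel (p m))^2 * q m) :=
    mul_nonneg (by positivity) hR
  have hcoef : 0 < 16*h^4 + 16*r*Δt*h^4 := by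
    have ha : (0:ℝ) < 16*h^4 := by positivity
    have hb : (0:ℝ) ≤ 16*r*Δt*h^4 := by
      have : (0:ℝ) ≤ r * (16*Δt*h^4) := mul_nonneg hr (by positivity)
      linarith
    linarith
  have t4 : (16*h^4 + 16*r*Δt*h^4) * W m < 0 :=
    mul_neg_of_pos_of_neg hcoef h0
  linarith [e', t1, t2, t3, t4]
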